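/- arXiv:2502.01095 — 2 statements merged into one kernel-verified Lean document; each statement's English description precedes it below -/
import Mathlib

section
/- For every λ ≥ 0, e^{-λ} = (1/√π) ∫₀^∞ e^{-s} e^{-λ²/(4s)} s^{-1/2} ds. -/
open MeasureTheory

private lemma glasser_aux (a : ℝ) (ha : 0 < a) :
    ∫ x in Set.Ioi (0:ℝ), Real.exp (-(x - a / x) ^ 2) = Real.sqrt Real.pi / 2 := by
  set φ : ℝ → ℝ := fun x => x - a / x with hφdef
  have hφ' : ∀ x ∈ Set.Ioi (0:ℝ), HasDerivWithinAt φ (1 + a / x ^ 2) (Set.Ioi 0) x := by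
    intro x hx
    have hx0 : x ≠ 0 := ne_of_gt hx
    have h1 : HasDerivAt (fun y : ℝ => a * y⁻¹) (a * (-(x ^ 2)⁻¹)) x :=
      (hasDerivAt_inv hx0).const_mul a
    have h2 : HasDerivAt φ (1 - a * (-(x ^ 2)⁻¹)) x := by
      have := (hasDerivAt_id' x).sub h1
      simpa [hφdef, div_eq_mul_inv, Pi.sub_def] using this
    have : (1 : ℝ) - a * (-(x ^ 2)⁻¹) = 1 + a / x ^ 2 := by ring
    rw [this] at h2
    exact h2.hasDerivWithinAt
  have hmono : StrictMonoOn φ (Set.Ioi 0) := by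
    intro x hx y hy hxy
    have : a / y < a / x := div_lt_div_of_pos_left ha hx hxy
    simp only [hφdef]
    linarith
  have hinj : Set.InjOn φ (Set.Ioi 0) := hmono.injOn
  have himg : φ '' Set.Ioi 0 = Set.univ := by
    apply Set.eq_univ_of_forall
    intro u
    set r : ℝ := Real.sqrt (u ^ 2 + 4 * a) with hrdef
    have hr2 : r ^ 2 = u ^ 2 + 4 * a := Real.sq_sqrt (by positivity)
    have hrn : 0 ≤ r := Real.sqrt_nonneg _
    have habs : |u| < r := by nlinarith [sq_abs u, abs_nonneg u]
    have hx : 0 < (u + r) / 2 := by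
      have h := neg_abs_le u
      nlinarith
    refine ⟨(u + r) / 2, hx, ?_⟩
    have hx0 : (u + r) / 2 ≠ 0 := ne_of_gt hx
    simp only [hφdef]
    have hdiv : a / ((u + r) / 2) = (r - u) / 2 := by
      rw [div_eq_iff hx0]
      linear_combination -hr2 / 4
    rw [hdiv]
    ring
  -- substitution u = x - a/x
  have key := MeasureTheory.integral_image_eq_integral_abs_deriv_smul (f' := fun x => 1 + a / x ^ 2)
    measurableSet_Ioi hφ' hinj (fun u => Real.exp (-u ^ 2))
  rw [himg] at key
  have hgauss : ∫ u in (Set.univ : Set ℝ), Real.exp (-u ^ 2) = Real.sqrt Real.pi := by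
    rw [Measure.restrict_univ]
    simpa using integral_gaussian 1
  rw [hgauss] at key
  -- integrability of the combined integrand
  have hmeas : Measurable φ := by
    apply Measurable.sub measurable_id
    exact measurable_const.div measurable_id
  have hC : IntegrableOn (fun x => |1 + a / x ^ 2| • Real.exp (-(φ x) ^ 2)) (Set.Ioi 0) := by
    have hiff := MeasureTheory.integrableOn_image_iff_integrableOn_abs_deriv_smul
      measurableSet_Ioi hφ' hinj (fun u => Real.exp (-u ^ 2))
    rw [himg] at hiff
    exact hiff.mp (by simpa [integrableOn_univ] using integrable_exp_neg_mul_sq (one_pos))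
  have hCnn : ∀ x ∈ Set.Ioi (0:ℝ),
      |1 + a / x ^ 2| • Real.exp (-(φ x) ^ 2) = (1 + a / x ^ 2) * Real.exp (-(φ x) ^ 2) := by
    intro x hx
    have hx0 : (0:ℝ) < x := hx
    have : (0:ℝ) < 1 + a / x ^ 2 := by positivity
    rw [abs_of_pos this, smul_eq_mul]
  have hAmeas : Measurable (fun x : ℝ => Real.exp (-(φ x) ^ 2)) := by
    exact (Real.measurable_exp.comp ((hmeas.pow_const 2).neg))
  have hA : IntegrableOn (fun x => Real.exp (-(φ x) ^ 2)) (Set.Ioi 0) := by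
    apply hC.mono' hAmeas.aestronglyMeasurable.restrict
    filter_upwards [ae_restrict_mem measurableSet_Ioi] with x hx
    rw [hCnn x hx]
    have hx0 : (0:ℝ) < x := hx
    have h1 : (1:ℝ) ≤ 1 + a / x ^ 2 := by
      have : 0 < a / x ^ 2 := by positivity
      linarith
    rw [Real.norm_eq_abs, abs_of_pos (Real.exp_pos _)]
    nlinarith [Real.exp_pos (-(φ x) ^ 2)]
  have hB : IntegrableOn (fun x => (a / x ^ 2) * Real.exp (-(φ x) ^ 2)) (Set.Ioi 0) := by
    have : (fun x : ℝ => (a / x ^ 2) * Real.exp (-(φ x) ^ 2)) =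
        fun x => (1 + a / x ^ 2) * Real.exp (-(φ x) ^ 2) - Real.exp (-(φ x) ^ 2) := by
      funext x; ring
    rw [this]
    apply Integrable.sub _ hA
    apply (hC.congr_fun hCnn measurableSet_Ioi)
  -- split the integral
  have hsplit : ∫ x in Set.Ioi (0:ℝ), |1 + a / x ^ 2| • Real.exp (-(φ x) ^ 2) =
      (∫ x in Set.Ioi (0:ℝ), Real.exp (-(φ x) ^ 2)) +
      ∫ x in Set.Ioi (0:ℝ), (a / x ^ 2) * Real.exp (-(φ x) ^ 2) := by
    rw [MeasureTheory.setIntegral_congr_fun measurableSet_Ioi hCnn]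
    rw [← MeasureTheory.integral_add hA hB]
    apply MeasureTheory.setIntegral_congr_fun measurableSet_Ioi
    intro x _; ring
  -- A = B via x ↦ a / x
  have hψ' : ∀ x ∈ Set.Ioi (0:ℝ), HasDerivWithinAt (fun x => a / x) (-(a / x ^ 2)) (Set.Ioi 0) x := by
    intro x hx
    have hx0 : x ≠ 0 := ne_of_gt hx
    have h1 : HasDerivAt (fun y : ℝ => a * y⁻¹) (a * (-(x ^ 2)⁻¹)) x :=
      (hasDerivAt_inv hx0).const_mul a
    have h2 : HasDerivAt (fun y : ℝ => a / y) (a * (-(x ^ 2)⁻¹)) x := by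
      simpa [div_eq_mul_inv] using h1
    have he : a * (-(x ^ 2)⁻¹) = -(a / x ^ 2) := by ring
    rw [he] at h2
    exact h2.hasDerivWithinAt
  have hψinj : Set.InjOn (fun x : ℝ => a / x) (Set.Ioi 0) := by
    intro x hx y hy hxy
    have hx0 : x ≠ 0 := ne_of_gt hx
    have hy0 : y ≠ 0 := ne_of_gt hy
    simp only at hxy
    rw [div_eq_div_iff hx0 hy0] at hxy
    exact (mul_left_cancel₀ (ne_of_gt ha) hxy).symm
  have hψimg : (fun x : ℝ => a / x) '' Set.Ioi 0 = Set.Ioi 0 := by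
    ext y
    constructor
    · rintro ⟨x, hx, rfl⟩
      exact div_pos ha hx
    · intro hy
      exact ⟨a / y, div_pos ha hy, by field_simp⟩
  have hAB := MeasureTheory.integral_image_eq_integral_abs_deriv_smul
    (f' := fun x => -(a / x ^ 2)) measurableSet_Ioi hψ' hψinj
    (fun u => Real.exp (-(u - a / u) ^ 2))
  rw [hψimg] at hAB
  have hAB' : ∫ x in Set.Ioi (0:ℝ),
      |(-(a / x ^ 2))| • Real.exp (-((a / x) - a / (a / x)) ^ 2) =
      ∫ x in Set.Ioi (0:ℝ), (a / x ^ 2) * Real.exp (-(φ x) ^ 2) := by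
    apply MeasureTheory.setIntegral_congr_fun measurableSet_Ioi
    intro x hx
    beta_reduce
    have hx0 : (0:ℝ) < x := hx
    have hax : a / x ≠ 0 := ne_of_gt (div_pos ha hx0)
    have h1 : a / (a / x) = x := by field_simp
    have h2 : |(-(a / x ^ 2))| = a / x ^ 2 := by
      rw [abs_neg, abs_of_pos (by positivity)]
    rw [h1, h2, smul_eq_mul]
    congr 2
    simp only [hφdef]
    ring
  rw [hAB'] at hAB
  -- conclude
  rw [hsplit, ← hAB] at key
  simp only [hφdef] at *
  linarith [key]

theorem subordination_identity (l : ℝ) (hl : 0 ≤ l) :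
    Real.exp (-l) =
      (Real.sqrt Real.pi)⁻¹ *
        ∫ s in Set.Ioi (0:ℝ), Real.exp (-s) * Real.exp (-l ^ 2 / (4 * s)) / Real.sqrt s := by
  have hπ : (0:ℝ) < Real.sqrt Real.pi := Real.sqrt_pos.2 Real.pi_pos
  -- substitution s = x ^ 2
  have hsq' : ∀ x ∈ Set.Ioi (0:ℝ),
      HasDerivWithinAt (fun x : ℝ => x ^ 2) (2 * x) (Set.Ioi 0) x := by
    intro x hx
    simpa [mul_comm] using (hasDerivAt_pow 2 x).hasDerivWithinAt
  have hsqinj : Set.InjOn (fun x : ℝ => x ^ 2) (Set.Ioi 0) := by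
    intro x hx y hy hxy
    have hx0 : (0:ℝ) < x := hx
    have hy0 : (0:ℝ) < y := hy
    simp only at hxy
    have h0 : (x - y) * (x + y) = 0 := by nlinarith
    rcases mul_eq_zero.1 h0 with h | h
    · linarith
    · linarith
  have hsqimg : (fun x : ℝ => x ^ 2) '' Set.Ioi 0 = Set.Ioi 0 := by
    ext y
    constructor
    · rintro ⟨x, hx, rfl⟩
      exact pow_pos (show (0:ℝ) < x from hx) 2
    · intro hy
      exact ⟨Real.sqrt y, Real.sqrt_pos.2 hy, Real.sq_sqrt (le_of_lt hy)⟩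
  have key := MeasureTheory.integral_image_eq_integral_abs_deriv_smul
    (f' := fun x => 2 * x) measurableSet_Ioi hsq' hsqinj
    (fun s => Real.exp (-s) * Real.exp (-l ^ 2 / (4 * s)) / Real.sqrt s)
  rw [hsqimg] at key
  have key2 : ∫ x in Set.Ioi (0:ℝ),
      |2 * x| • (Real.exp (-x ^ 2) * Real.exp (-l ^ 2 / (4 * x ^ 2)) / Real.sqrt (x ^ 2)) =
      ∫ x in Set.Ioi (0:ℝ), 2 * (Real.exp (-x ^ 2) * Real.exp (-l ^ 2 / (4 * x ^ 2))) := by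
    apply MeasureTheory.setIntegral_congr_fun measurableSet_Ioi
    intro x hx
    beta_reduce
    have hx0 : (0:ℝ) < x := hx
    have h1 : Real.sqrt (x ^ 2) = x := by
      rw [Real.sqrt_sq (le_of_lt hx0)]
    have h2 : |2 * x| = 2 * x := abs_of_pos (by linarith)
    rw [h1, h2, smul_eq_mul]
    field_simp
  rw [key2] at key
  rcases eq_or_lt_of_le hl with rfl | hlpos
  · -- l = 0
    have : ∫ x in Set.Ioi (0:ℝ), 2 * (Real.exp (-x ^ 2) * Real.exp (-(0:ℝ) ^ 2 / (4 * x ^ 2))) =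
        ∫ x in Set.Ioi (0:ℝ), 2 * Real.exp (-1 * x ^ 2) := by
      apply MeasureTheory.setIntegral_congr_fun measurableSet_Ioi
      intro x hx
      norm_num
    rw [this, MeasureTheory.integral_const_mul, integral_gaussian_Ioi] at key
    rw [key]
    have : Real.sqrt (Real.pi / 1) = Real.sqrt Real.pi := by norm_num
    rw [this]
    field_simp
    simp
  · -- l > 0
    set a : ℝ := l / 2 with hadef
    have ha : 0 < a := by positivity
    have hcongr : ∫ x in Set.Ioi (0:ℝ), 2 * (Real.exp (-x ^ 2) * Real.exp (-l ^ 2 / (4 * x ^ 2))) =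
        ∫ x in Set.Ioi (0:ℝ), (2 * Real.exp (-l)) * Real.exp (-(x - a / x) ^ 2) := by
      apply MeasureTheory.setIntegral_congr_fun measurableSet_Ioi
      intro x hx
      beta_reduce
      have hx0 : x ≠ 0 := ne_of_gt hx
      rw [← Real.exp_add, mul_assoc, ← Real.exp_add]
      congr 2
      simp only [hadef]
      field_simp
      ring
    rw [hcongr, MeasureTheory.integral_const_mul, glasser_aux a ha] at key
    rw [key]
    field_simp
end

section
/- Let g : ℝ → ℂ be twice continuously differentiable with ‖g‖_∞, ‖s²g(s)‖_∞, ‖g''‖_∞, ‖s²g''(s)‖_∞ all finite and with g, g'' integrable. Then the Fourier transform ĝ satisfies ∫_{-∞}^{∞} |ĝ(t)| dt ≤ π² ( ‖g‖_∞ + ‖s² g(s)‖_∞^{1/2} ‖g''‖_∞^{1/2} + ‖s² g''(s)‖_∞ ). -/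
open MeasureTheory Real

lemma norm_sq_mul (f : ℝ → ℂ) (s : ℝ) : ‖(s : ℂ) ^ 2 * f s‖ = s ^ 2 * ‖f s‖ := by
  rw [norm_mul, norm_pow, Complex.norm_real, Real.norm_eq_abs, sq_abs]

lemma int_norm_le (f : ℝ → ℂ) (M a : ℝ) (ha : 0 < a)
    (h : ∀ s, ‖f s‖ ≤ M * (1 + (a * s) ^ 2)⁻¹) :
    ∫ s : ℝ, ‖f s‖ ≤ M * (π / a) := by
  have hInt : Integrable (fun s : ℝ => M * (1 + (a * s) ^ 2)⁻¹) :=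
    (integrable_inv_one_add_sq.comp_mul_left' ha.ne').const_mul M
  have h1 := integral_mono_of_nonneg (Filter.Eventually.of_forall fun s => norm_nonneg (f s))
    hInt (Filter.Eventually.of_forall h)
  refine h1.trans (le_of_eq ?_)
  rw [integral_const_mul]
  congr 1
  have h2 := MeasureTheory.Measure.integral_comp_mul_left (fun x : ℝ => (1 + x ^ 2)⁻¹) a
  rw [integral_univ_inv_one_add_sq] at h2
  rw [h2, abs_of_pos (inv_pos.2 ha), smul_eq_mul]
  ring

lemma decay_int (f : ℝ → ℂ) (A B a : ℝ) (ha : 0 < a)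
    (hA : ∀ s, ‖f s‖ ≤ A) (hB : ∀ s : ℝ, ‖(s : ℂ) ^ 2 * f s‖ ≤ B) :
    ∫ s : ℝ, ‖f s‖ ≤ (A + a ^ 2 * B) * (π / a) := by
  refine int_norm_le f _ a ha fun s => ?_
  have hpos : (0 : ℝ) < 1 + (a * s) ^ 2 := by positivity
  rw [← div_eq_mul_inv, le_div_iff₀ hpos]
  have h1 := hB s
  rw [norm_sq_mul] at h1
  nlinarith [hA s, norm_nonneg (f s), sq_nonneg a, sq_nonneg s,
    mul_le_mul_of_nonneg_left h1 (sq_nonneg a)]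

lemma integrable_deriv_aux (g g' g'' : ℝ → ℂ)
    (hg' : ∀ s, HasDerivAt g (g' s) s) (hg'' : ∀ s, HasDerivAt g' (g'' s) s)
    (hcont : Continuous g'') (C D : ℝ)
    (hC : ∀ s, ‖g'' s‖ ≤ C) (hD : ∀ s : ℝ, ‖(s : ℂ) ^ 2 * g'' s‖ ≤ D)
    (hint : Integrable g) : Integrable g' := by
  have hCnn : 0 ≤ C := le_trans (norm_nonneg _) (hC 0)
  have hDnn : 0 ≤ D := le_trans (norm_nonneg _) (hD 0)
  have hg'diff : Differentiable ℝ g' := fun s => (hg'' s).differentiableAt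
  have hg'cont : Continuous g' := hg'diff.continuous
  have hDv : ∀ w : ℝ, ‖g'' w‖ * w ^ 2 ≤ D := by
    intro w
    have h := hD w
    rw [norm_sq_mul] at h
    linarith [h]
  have hbd : ∀ x : ℝ, ∀ v ∈ Set.Icc x (x + 1), ‖g'' v‖ ≤ (5 * C + 8 * D) / (1 + x ^ 2) := by
    intro x v hv
    obtain ⟨hv1, hv2⟩ := hv
    rw [le_div_iff₀ (by positivity)]
    rcases le_or_gt (x ^ 2) 4 with h4 | h4
    · nlinarith [hC v, norm_nonneg (g'' v)]
    · rcases le_or_gt 0 x with hx | hx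
      · have hx2 : 2 < x := by nlinarith
        have hvsq : x ^ 2 ≤ v ^ 2 := by nlinarith
        nlinarith [hDv v, norm_nonneg (g'' v),
          mul_le_mul_of_nonneg_left hvsq (norm_nonneg (g'' v))]
      · have hx2 : x < -2 := by nlinarith
        have hvsq : (x + 1) ^ 2 ≤ v ^ 2 := by nlinarith
        have hpoly : 1 + x ^ 2 ≤ 8 * (x + 1) ^ 2 := by nlinarith
        nlinarith [hDv v, norm_nonneg (g'' v),
          mul_le_mul_of_nonneg_left hvsq (norm_nonneg (g'' v)),
          mul_le_mul_of_nonneg_left hpoly (norm_nonneg (g'' v))]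
  set M : ℝ → ℝ := fun x => (5 * C + 8 * D) / (1 + x ^ 2) with hM
  have hkey : ∀ x : ℝ, ‖g' x‖ ≤ ‖g (x + 1)‖ + ‖g x‖ + M x := by
    intro x
    have hgi : IntervalIntegrable g' volume x (x + 1) := hg'cont.intervalIntegrable _ _
    have hFT : ∫ u in x..(x + 1), g' u = g (x + 1) - g x :=
      intervalIntegral.integral_eq_sub_of_hasDerivAt (fun u _ => hg' u) hgi
    have hstep : ∀ u ∈ Set.uIoc x (x + 1), ‖g' u - g' x‖ ≤ M x := by
      intro u hu
      rw [Set.uIoc_of_le (by linarith : x ≤ x + 1)] at hu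
      have hFT2 : ∫ v in x..u, g'' v = g' u - g' x :=
        intervalIntegral.integral_eq_sub_of_hasDerivAt (fun v _ => hg'' v)
          (hcont.intervalIntegrable _ _)
      rw [← hFT2]
      have hb2 : ∀ v ∈ Set.uIoc x u, ‖g'' v‖ ≤ M x := by
        intro v hv
        rw [Set.uIoc_of_le hu.1.le] at hv
        exact hbd x v ⟨hv.1.le, hv.2.trans hu.2⟩
      calc ‖∫ v in x..u, g'' v‖ ≤ M x * |u - x| :=
            intervalIntegral.norm_integral_le_of_norm_le_const hb2
        _ ≤ M x * 1 := by
            have h1 : |u - x| ≤ 1 := by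
              rw [abs_of_nonneg (by linarith [hu.1.le])]; linarith [hu.2]
            have hMnn : 0 ≤ M x := by positivity
            nlinarith
        _ = M x := mul_one _
    have e1 : ∫ u in x..(x + 1), (g' u - g' x) = (g (x + 1) - g x) - g' x := by
      rw [intervalIntegral.integral_sub hgi (intervalIntegrable_const), hFT,
        intervalIntegral.integral_const]
      simp
    have e2 : g' x = (g (x + 1) - g x) - ∫ u in x..(x + 1), (g' u - g' x) := by
      rw [e1]; ring
    have hnint : ‖∫ u in x..(x + 1), (g' u - g' x)‖ ≤ M x := by
      calc ‖∫ u in x..(x + 1), (g' u - g' x)‖ ≤ M x * |x + 1 - x| :=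
            intervalIntegral.norm_integral_le_of_norm_le_const hstep
        _ = M x := by simp
    calc ‖g' x‖ = ‖(g (x + 1) - g x) - ∫ u in x..(x + 1), (g' u - g' x)‖ := by rw [← e2]
      _ ≤ ‖g (x + 1) - g x‖ + ‖∫ u in x..(x + 1), (g' u - g' x)‖ := norm_sub_le _ _
      _ ≤ (‖g (x + 1)‖ + ‖g x‖) + M x := add_le_add (norm_sub_le _ _) hnint
      _ = ‖g (x + 1)‖ + ‖g x‖ + M x := by ring
  have hFint : Integrable (fun x : ℝ => ‖g (x + 1)‖ + ‖g x‖ + M x) := by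
    refine (((hint.comp_add_right 1).norm.add hint.norm)).add ?_
    simp only [hM, div_eq_mul_inv]
    exact integrable_inv_one_add_sq.const_mul _
  exact hFint.mono' hg'cont.aestronglyMeasurable
    (Filter.Eventually.of_forall fun x => by simpa using hkey x)

set_option maxHeartbeats 1000000 in
theorem fourier_L1_bound (g g' g'' : ℝ → ℂ)
    (hg' : ∀ s, HasDerivAt g (g' s) s) (hg'' : ∀ s, HasDerivAt g' (g'' s) s)
    (hcont : Continuous g'')
    (A B C D : ℝ)
    (hA : ∀ s, ‖g s‖ ≤ A) (hB : ∀ s : ℝ, ‖(s : ℂ) ^ 2 * g s‖ ≤ B)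
    (hC : ∀ s, ‖g'' s‖ ≤ C) (hD : ∀ s : ℝ, ‖(s : ℂ) ^ 2 * g'' s‖ ≤ D)
    (hint : Integrable g) (hint'' : Integrable g'') :
    ∫ t : ℝ, ‖FourierTransform.fourier g t‖ ≤ π ^ 2 * (A + Real.sqrt (B * C) + D) := by
  have hAnn : 0 ≤ A := le_trans (norm_nonneg _) (hA 0)
  have hBnn : 0 ≤ B := le_trans (norm_nonneg _) (hB 0)
  have hCnn : 0 ≤ C := le_trans (norm_nonneg _) (hC 0)
  have hDnn : 0 ≤ D := le_trans (norm_nonneg _) (hD 0)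
  have hintg' : Integrable g' := integrable_deriv_aux g g' g'' hg' hg'' hcont C D hC hD hint
  have hdg : deriv g = g' := funext fun s => (hg' s).deriv
  have hdg' : deriv g' = g'' := funext fun s => (hg'' s).deriv
  have hdiffg : Differentiable ℝ g := fun s => (hg' s).differentiableAt
  have hdiffg' : Differentiable ℝ g' := fun s => (hg'' s).differentiableAt
  set F := FourierTransform.fourier g with hF
  have h1 : FourierTransform.fourier g'
      = fun x : ℝ => (2 * π * Complex.I * x) • FourierTransform.fourier g x := by
    have h := Real.fourier_deriv hint hdiffg (by rwa [hdg])
    rwa [hdg] at h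
  have h2 : FourierTransform.fourier g''
      = fun x : ℝ => (2 * π * Complex.I * x) • FourierTransform.fourier g' x := by
    have h := Real.fourier_deriv hintg' hdiffg' (by rwa [hdg'])
    rwa [hdg'] at h
  have hcnorm : ∀ t : ℝ, ‖(2 * ↑π * Complex.I * (t : ℂ))‖ = 2 * π * |t| := by
    intro t
    rw [norm_mul, norm_mul, norm_mul]
    simp [Complex.norm_I, Complex.norm_real, abs_of_nonneg pi_pos.le]
  have hK1 : ∀ t, ‖F t‖ ≤ ∫ s : ℝ, ‖g s‖ := fun t =>
    VectorFourier.norm_fourierIntegral_le_integral_norm _ _ _ _ _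
  have hK2 : ∀ t : ℝ, (2 * π * |t|) ^ 2 * ‖F t‖ ≤ ∫ s : ℝ, ‖g'' s‖ := by
    intro t
    have e : FourierTransform.fourier g'' t
        = (2 * ↑π * Complex.I * t) * ((2 * ↑π * Complex.I * t) * F t) := by
      rw [congrFun h2 t, congrFun h1 t]
      simp [smul_eq_mul, hF]
    have hb : ‖FourierTransform.fourier g'' t‖ ≤ ∫ s : ℝ, ‖g'' s‖ :=
      VectorFourier.norm_fourierIntegral_le_integral_norm _ _ _ _ _
    calc (2 * π * |t|) ^ 2 * ‖F t‖ = ‖FourierTransform.fourier g'' t‖ := by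
          rw [e, norm_mul, hcnorm, norm_mul, hcnorm]; ring
      _ ≤ _ := hb
  clear_value F
  have master : ∀ b : ℝ, 0 < b →
      (∫ t : ℝ, ‖F t‖) ≤ π ^ 2 * A + B / (4 * b ^ 2) + b ^ 2 * C / 2 + π ^ 2 * D / 2 := by
    intro b hb
    have hπ : (0 : ℝ) < π := pi_pos
    have hK1' : ∫ s : ℝ, ‖g s‖ ≤ (A + (1 / (2 * π * b)) ^ 2 * B) * (π / (1 / (2 * π * b))) :=
      decay_int g A B _ (by positivity) hA hB
    have hK2' : ∫ s : ℝ, ‖g'' s‖ ≤ (C + (π / b) ^ 2 * D) * (π / (π / b)) :=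
      decay_int g'' C D _ (by positivity) hC hD
    set R1 := (A + (1 / (2 * π * b)) ^ 2 * B) * (π / (1 / (2 * π * b))) with hR1
    set R2 := (C + (π / b) ^ 2 * D) * (π / (π / b)) with hR2
    have hpt : ∀ t : ℝ, ‖F t‖ ≤ (R1 + b ^ 2 * R2) * (1 + ((2 * π * b) * t) ^ 2)⁻¹ := by
      intro t
      have hpos : (0 : ℝ) < 1 + ((2 * π * b) * t) ^ 2 := by positivity
      rw [← div_eq_mul_inv, le_div_iff₀ hpos]
      have e1 := (hK1 t).trans hK1'
      have e2 := (hK2 t).trans hK2'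
      have habs : ((2 * π * b) * t) ^ 2 = b ^ 2 * (2 * π * |t|) ^ 2 := by
        simp only [mul_pow, sq_abs]; ring
      calc ‖F t‖ * (1 + ((2 * π * b) * t) ^ 2)
          = ‖F t‖ + b ^ 2 * ((2 * π * |t|) ^ 2 * ‖F t‖) := by rw [habs]; ring
        _ ≤ R1 + b ^ 2 * R2 := add_le_add e1 (mul_le_mul_of_nonneg_left e2 (sq_nonneg b))
    have hmain := int_norm_le F _ (2 * π * b) (by positivity) hpt
    refine hmain.trans (le_of_eq ?_)
    rw [hR1, hR2]
    have hbne : b ≠ 0 := hb.ne'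
    have hπne : π ≠ 0 := pi_ne_zero
    field_simp
    ring
  have key : ∀ ε : ℝ, 0 < ε →
      (∫ t : ℝ, ‖F t‖) ≤ π ^ 2 * (A + Real.sqrt ((B + ε) * (C + ε)) + D) := by
    intro ε hε
    have hBε : 0 < B + ε := by linarith
    have hCε : 0 < C + ε := by linarith
    set P := Real.sqrt (B + ε) with hPdef
    set Q := Real.sqrt (C + ε) with hQdef
    have hP : 0 < P := Real.sqrt_pos.2 hBε
    have hQ : 0 < Q := Real.sqrt_pos.2 hCε
    have hP2 : P ^ 2 = B + ε := Real.sq_sqrt hBε.le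
    have hQ2 : Q ^ 2 = C + ε := Real.sq_sqrt hCε.le
    set r := Real.sqrt 2 with hrdef
    have hr : 0 < r := Real.sqrt_pos.2 (by norm_num)
    have hr2 : r ^ 2 = 2 := Real.sq_sqrt (by norm_num)
    set b := Real.sqrt (P / (r * Q)) with hbdef
    have hb : 0 < b := Real.sqrt_pos.2 (by positivity)
    have hb2 : b ^ 2 = P / (r * Q) := Real.sq_sqrt (by positivity)
    refine (master b hb).trans ?_
    have hPQ : P * Q = Real.sqrt ((B + ε) * (C + ε)) := (Real.sqrt_mul hBε.le _).symm
    rw [← hPQ]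
    have hBP : B ≤ P ^ 2 := by nlinarith
    have hCQ : C ≤ Q ^ 2 := by nlinarith
    have hb2' : b ^ 2 * (r * Q) = P := by
      rw [hb2]; field_simp
    clear_value P Q r b
    have t1 : B / (4 * b ^ 2) ≤ r * (P * Q) / 4 := by
      rw [div_le_iff₀ (by positivity)]
      have e : r * (P * Q) / 4 * (4 * b ^ 2) = P * (b ^ 2 * (r * Q)) := by ring
      rw [e, hb2']
      nlinarith [hBP]
    have t2 : b ^ 2 * C / 2 ≤ r * (P * Q) / 4 := by
      rw [← mul_le_mul_iff_of_pos_right (show (0:ℝ) < 2 * (r * Q) by positivity)]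
      have e1 : b ^ 2 * C / 2 * (2 * (r * Q)) = C * (b ^ 2 * (r * Q)) := by ring
      have e2 : r * (P * Q) / 4 * (2 * (r * Q)) = r ^ 2 * (P * Q ^ 2) / 2 := by ring
      rw [e1, e2, hb2', hr2]
      nlinarith [hCQ, hP.le]
    have hπ1 : 1 ≤ π ^ 2 := by nlinarith [pi_gt_three]
    have hrle : r ≤ 2 := by nlinarith
    have hPQpos : 0 < P * Q := mul_pos hP hQ
    nlinarith [t1, t2, hDnn, sq_nonneg π,
      mul_nonneg (sub_nonneg.2 hπ1) hPQpos.le,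
      mul_nonneg (show (0:ℝ) ≤ 2 - r by linarith) hPQpos.le,
      mul_nonneg (sq_nonneg π) hDnn]
  have cont : Continuous fun ε : ℝ => π ^ 2 * (A + Real.sqrt ((B + ε) * (C + ε)) + D) := by
    have : Continuous fun ε : ℝ => (B + ε) * (C + ε) :=
      (continuous_const.add continuous_id).mul (continuous_const.add continuous_id)
    exact continuous_const.mul
      ((continuous_const.add (Real.continuous_sqrt.comp this)).add continuous_const)
  have lim : Filter.Tendsto (fun ε : ℝ => π ^ 2 * (A + Real.sqrt ((B + ε) * (C + ε)) + D))
      (nhdsWithin 0 (Set.Ioi 0)) (nhds (π ^ 2 * (A + Real.sqrt (B * C) + D))) := by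
    have h0 := (cont.tendsto 0).mono_left (nhdsWithin_le_nhds (s := Set.Ioi (0:ℝ)))
    simpa using h0
  exact ge_of_tendsto lim (eventually_nhdsWithin_of_forall fun ε hε => key ε hε)
end
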